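/- Let θ : Ω → Ω be an invertible ergodic measure-preserving transformation of a non-atomic probability space (Ω, 𝓕, ℙ). Then there exists a measurable function a : Ω → (0, ∞) such that the discrete-time scalar linear cocycle Φ over θ generated by a satisfies the integrability conditions E[ln⁺ Φ(1, ·)] < ∞ and E[ln⁺ (Φ(1, ·)⁻¹)] < ∞, while its dichotomy spectrum is unbounded from above and unbounded from below. -/

import Mathlib

open MeasureTheory Filter
open scoped ENNReal

noncomputable section

variable {Ω : Type*} [MeasurableSpace Ω]

/-- The ℤ-action generated by an invertible map `θ` with inverse `θinv`. -/
def zIter (θ θinv : Ω → Ω) : ℤ → Ω → Ω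
  | Int.ofNat m, ω => θ^[m] ω
  | Int.negSucc m, ω => θinv^[m + 1] ω

/-- The discrete-time scalar linear cocycle generated by `a : Ω → (0, ∞)` over the
invertible map `θ` (with inverse `θinv`): `Φ(n, ω) = a(θ^{n-1} ω) ⋯ a(ω)` for `n ≥ 1`,
`Φ(0, ω) = 1`, and `Φ(n, ω) = a(θ^{-1} ω)⁻¹ ⋯ a(θ^{n} ω)⁻¹` for `n ≤ -1`. -/
def scalarCocycle (θ θinv : Ω → Ω) (a : Ω → ℝ) : ℤ → Ω → ℝ
  | Int.ofNat m, ω => ∏ i ∈ Finset.range m, a (θ^[i] ω)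
  | Int.negSucc m, ω => (∏ i ∈ Finset.range (m + 1), a (θinv^[i + 1] ω))⁻¹

/-- The discrete-time scalar cocycle `Φ` over `θ` admits an exponential dichotomy with
growth rate `γ`: there are an invariant projector `P` and constants `a > 0`, `K ≥ 1` with,
almost surely, `|Φ(n,ω) P(ω)| ≤ K e^{(γ-a) n}` for `n ≥ 0` and
`|Φ(n,ω)(1 - P(ω))| ≤ K e^{(γ+a) n}` for `n ≤ 0`. -/
def ScalarAdmitsED (ℙ : Measure Ω) (θ θinv : Ω → Ω) (Φ : ℤ → Ω → ℝ) (γ : ℝ) : Prop :=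
  ∃ P : Ω → ℝ, Measurable P ∧ (∀ ω, P ω * P ω = P ω) ∧
    (∀ (n : ℤ) (ω : Ω), P (zIter θ θinv n ω) * Φ n ω = Φ n ω * P ω) ∧
    ∃ a > (0:ℝ), ∃ K ≥ (1:ℝ), ∀ᵐ ω ∂ℙ,
      (∀ n : ℤ, 0 ≤ n → |Φ n ω * P ω| ≤ K * Real.exp ((γ - a) * (n : ℝ))) ∧
      (∀ n : ℤ, n ≤ 0 → |Φ n ω * (1 - P ω)| ≤ K * Real.exp ((γ + a) * (n : ℝ)))

/-- `ln⁺ x = max {0, ln x}`. -/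
def posLog (x : ℝ) : ℝ := max (Real.log x) 0

/-- Construction of the weight function on a non-atomic probability space. -/
lemma exists_weight (ℙ : Measure Ω) [IsProbabilityMeasure ℙ]
    (hna : ∀ A : Set Ω, MeasurableSet A → 0 < ℙ A →
      ∃ B ⊆ A, MeasurableSet B ∧ 0 < ℙ B ∧ ℙ B < ℙ A) :
    ∃ a : Ω → ℝ, Measurable a ∧ (∀ ω, 0 < a ω) ∧
      Integrable (fun ω => posLog (a ω)) ℙ ∧
      Integrable (fun ω => posLog ((a ω)⁻¹)) ℙ ∧
      (∀ C : ℝ, 0 < ℙ {ω | C < a ω}) ∧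
      (∀ ε : ℝ, 0 < ε → 0 < ℙ {ω | a ω < ε}) := by
  classical
  -- halving step
  have halve : ∀ A : Set Ω, MeasurableSet A → 0 < ℙ A →
      ∃ B, B ⊆ A ∧ MeasurableSet B ∧ 0 < ℙ B ∧ ℙ B ≤ ℙ A / 2 := by
    intro A hA hApos
    obtain ⟨B, hBA, hBm, hBpos, hBlt⟩ := hna A hA hApos
    by_cases h : ℙ B ≤ ℙ A / 2
    · exact ⟨B, hBA, hBm, hBpos, h⟩
    · have hdiff : ℙ (A \ B) = ℙ A - ℙ B :=
        measure_diff hBA hBm.nullMeasurableSet (measure_ne_top ℙ B)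
      refine ⟨A \ B, Set.diff_subset, hA.diff hBm, ?_, ?_⟩
      · rw [hdiff]
        exact tsub_pos_of_lt hBlt
      · rw [hdiff, tsub_le_iff_right]
        calc ℙ A = ℙ A / 2 + ℙ A / 2 := (ENNReal.add_halves _).symm
          _ ≤ ℙ A / 2 + ℙ B := by
              gcongr
              exact le_of_not_ge h
  choose F hF1 hF2 hF3 hF4 using halve
  -- the nested sequence
  let T := {S : Set Ω // MeasurableSet S ∧ 0 < ℙ S}
  let step : T → T := fun S => ⟨F S.1 S.2.1 S.2.2, hF2 S.1 S.2.1 S.2.2, hF3 S.1 S.2.1 S.2.2⟩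
  have huniv : (0:ℝ≥0∞) < ℙ Set.univ := by simp
  let seq : ℕ → T := fun k => step^[k] ⟨Set.univ, MeasurableSet.univ, huniv⟩
  let A : ℕ → Set Ω := fun k => (seq k).1
  have hseqsucc : ∀ k, seq (k + 1) = step (seq k) := by
    intro k
    exact Function.iterate_succ_apply' step k _
  have hAm : ∀ k, MeasurableSet (A k) := fun k => (seq k).2.1
  have hApos : ∀ k, 0 < ℙ (A k) := fun k => (seq k).2.2
  have hAsub : ∀ k, A (k + 1) ⊆ A k := by
    intro k
    show (seq (k+1)).1 ⊆ (seq k).1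
    rw [hseqsucc]
    exact hF1 _ _ _
  have hAhalf : ∀ k, ℙ (A (k + 1)) ≤ ℙ (A k) / 2 := by
    intro k
    show ℙ (seq (k+1)).1 ≤ ℙ (seq k).1 / 2
    rw [hseqsucc]
    exact hF4 _ _ _
  have hAbound : ∀ k, ℙ (A k) ≤ 2⁻¹ ^ k := by
    intro k
    induction k with
    | zero => simp [A, seq]
    | succ k ih =>
      calc ℙ (A (k + 1)) ≤ ℙ (A k) / 2 := hAhalf k
        _ ≤ 2⁻¹ ^ k / 2 := by gcongr
        _ = 2⁻¹ ^ (k + 1) := by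
            rw [pow_succ, div_eq_mul_inv]
  -- disjoint pieces
  let D : ℕ → Set Ω := fun k => A k \ A (k + 1)
  have hDm : ∀ k, MeasurableSet (D k) := fun k => (hAm k).diff (hAm (k + 1))
  have hAanti : ∀ j k, j ≤ k → A k ⊆ A j := by
    intro j k hjk
    induction hjk with
    | refl => exact subset_rfl
    | step _ ih => rename_i m hm; exact (hAsub m).trans ih
  have hDpos : ∀ k, 0 < ℙ (D k) := by
    intro k
    have h1 : ℙ (A (k + 1)) < ℙ (A k) := by
      calc ℙ (A (k + 1)) ≤ ℙ (A k) / 2 := hAhalf k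
        _ < ℙ (A k) := ENNReal.half_lt_self (hApos k).ne' (measure_ne_top ℙ _)
    have hdiff : ℙ (D k) = ℙ (A k) - ℙ (A (k + 1)) :=
      measure_diff (hAsub k) (hAm (k + 1)).nullMeasurableSet (measure_ne_top ℙ _)
    rw [hdiff]
    exact tsub_pos_of_lt h1
  have hDbound : ∀ k, ℙ (D k) ≤ 2⁻¹ ^ k :=
    fun k => (measure_mono Set.diff_subset).trans (hAbound k)
  have hDdisj : ∀ j k, j ≠ k → ∀ ω, ω ∈ D j → ω ∉ D k := by
    have key : ∀ j k, j < k → ∀ ω, ω ∈ D j → ω ∉ D k := by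
      intro j k hjk ω hj hk
      exact hj.2 (hAanti (j + 1) k hjk ((Set.diff_subset : D k ⊆ A k) hk))
    intro j k hjk ω hj hk
    rcases lt_or_gt_of_ne hjk with h | h
    · exact key j k h ω hj hk
    · exact key k j h ω hk hj
  -- the weight function via ENNReal sums
  let gp : Ω → ℝ≥0∞ := fun ω =>
    ∑' k, (D k).indicator (fun _ => if Even k then ((k : ℝ≥0∞) + 1) else 0) ω
  let gm : Ω → ℝ≥0∞ := fun ω =>
    ∑' k, (D k).indicator (fun _ => if Even k then 0 else ((k : ℝ≥0∞) + 1)) ω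
  have hgpm : Measurable gp :=
    Measurable.ennreal_tsum fun k => Measurable.indicator measurable_const (hDm k)
  have hgmm : Measurable gm :=
    Measurable.ennreal_tsum fun k => Measurable.indicator measurable_const (hDm k)
  let g : Ω → ℝ := fun ω => (gp ω).toReal - (gm ω).toReal
  have hgm : Measurable g := (hgpm.ennreal_toReal).sub (hgmm.ennreal_toReal)
  let c : ℕ → ℝ := fun k => if Even k then (k : ℝ) + 1 else -((k : ℝ) + 1)
  -- pointwise values
  have hval : ∀ k ω, ω ∈ D k → g ω = c k := by
    intro k ω hω
    have hgp : gp ω = (if Even k then ((k : ℝ≥0∞) + 1) else 0) := by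
      refine (tsum_eq_single (f := fun j =>
        (D j).indicator (fun _ => if Even j then ((j : ℝ≥0∞) + 1) else 0) ω) k
        (fun j hjk => Set.indicator_of_notMem (hDdisj k j (Ne.symm hjk) ω hω) _)).trans ?_
      exact Set.indicator_of_mem hω _
    have hgm' : gm ω = (if Even k then 0 else ((k : ℝ≥0∞) + 1)) := by
      refine (tsum_eq_single (f := fun j =>
        (D j).indicator (fun _ => if Even j then 0 else ((j : ℝ≥0∞) + 1)) ω) k
        (fun j hjk => Set.indicator_of_notMem (hDdisj k j (Ne.symm hjk) ω hω) _)).trans ?_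
      exact Set.indicator_of_mem hω _
    have htr : ((k : ℝ≥0∞) + 1).toReal = (k : ℝ) + 1 := by
      rw [ENNReal.toReal_add (ENNReal.natCast_ne_top k) ENNReal.one_ne_top]
      simp
    by_cases hk : Even k
    · show (gp ω).toReal - (gm ω).toReal = c k
      rw [hgp, hgm', if_pos hk, if_pos hk, show c k = (k : ℝ) + 1 from if_pos hk, htr]
      simp
    · show (gp ω).toReal - (gm ω).toReal = c k
      rw [hgp, hgm', if_neg hk, if_neg hk, show c k = -((k : ℝ) + 1) from if_neg hk, htr]
      simp
  have hval0 : ∀ ω, (∀ k, ω ∉ D k) → g ω = 0 := by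
    intro ω hω
    have hgp : gp ω = 0 := by
      have : ∀ j, (D j).indicator (fun _ => if Even j then ((j : ℝ≥0∞) + 1) else 0) ω = 0 :=
        fun j => Set.indicator_of_notMem (hω j) _
      simp [gp, this]
    have hgm' : gm ω = 0 := by
      have : ∀ j, (D j).indicator (fun _ => if Even j then 0 else ((j : ℝ≥0∞) + 1)) ω = 0 :=
        fun j => Set.indicator_of_notMem (hω j) _
      simp [gm, this]
    simp [g, hgp, hgm']
  -- integrability of g
  have hgabs : ∀ ω, (‖g ω‖₊ : ℝ≥0∞) ≤ ∑' k : ℕ, (D k).indicator (fun _ => ((k : ℝ≥0∞) + 1)) ω := by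
    intro ω
    by_cases h : ∃ k, ω ∈ D k
    · obtain ⟨k, hk⟩ := h
      have h1 : g ω = c k := hval k ω hk
      have h2 : (‖g ω‖₊ : ℝ≥0∞) = (k : ℝ≥0∞) + 1 := by
        rw [h1]
        have habs : |c k| = (k : ℝ) + 1 := by
          by_cases hke : Even k
          · rw [show c k = (k : ℝ) + 1 from if_pos hke]
            exact abs_of_nonneg (by positivity)
          · rw [show c k = -((k : ℝ) + 1) from if_neg hke, abs_neg]
            exact abs_of_nonneg (by positivity)
        rw [← enorm_eq_nnnorm, Real.enorm_eq_ofReal_abs, habs,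
          ENNReal.ofReal_add (Nat.cast_nonneg k) zero_le_one]
        simp
      rw [h2]
      have := ENNReal.le_tsum (f := fun j =>
        (D j).indicator (fun _ => ((j : ℝ≥0∞) + 1)) ω) k
      rwa [Set.indicator_of_mem hk] at this
    · push_neg at h
      rw [hval0 ω h]
      simp
  have hsum : (∑' k : ℕ, ((k : ℝ≥0∞) + 1) * ℙ (D k)) < ⊤ := by
    have hle : ∀ k : ℕ, ((k : ℝ≥0∞) + 1) * ℙ (D k) ≤ ENNReal.ofReal (((k : ℝ) + 1) * 2⁻¹ ^ k) := by
      intro k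
      have h1 : ((k : ℝ≥0∞) + 1) * ℙ (D k) ≤ ((k : ℝ≥0∞) + 1) * 2⁻¹ ^ k := by
        gcongr
        exact hDbound k
      refine h1.trans (le_of_eq ?_)
      rw [ENNReal.ofReal_mul (by positivity), ENNReal.ofReal_pow (by norm_num)]
      congr 1
      · rw [ENNReal.ofReal_add (Nat.cast_nonneg k) zero_le_one]
        simp
      · congr 1
        rw [ENNReal.ofReal_inv_of_pos (by norm_num)]
        simp
    have hsummable : Summable (fun k : ℕ => ((k : ℝ) + 1) * 2⁻¹ ^ k) := by
      have h1 : Summable (fun k : ℕ => (k : ℝ) ^ 1 * 2⁻¹ ^ k) :=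
        summable_pow_mul_geometric_of_norm_lt_one 1 (by rw [norm_inv]; simp; norm_num)
      have h2 : Summable (fun k : ℕ => (2⁻¹ : ℝ) ^ k) :=
        summable_geometric_of_lt_one (by norm_num) (by norm_num)
      exact (h1.add h2).congr (fun k => by ring)
    calc (∑' k : ℕ, ((k : ℝ≥0∞) + 1) * ℙ (D k))
        ≤ ∑' k : ℕ, ENNReal.ofReal (((k : ℝ) + 1) * 2⁻¹ ^ k) := ENNReal.tsum_le_tsum hle
      _ = ENNReal.ofReal (∑' k : ℕ, ((k : ℝ) + 1) * 2⁻¹ ^ k) :=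
          (ENNReal.ofReal_tsum_of_nonneg (fun k => by positivity) hsummable).symm
      _ < ⊤ := ENNReal.ofReal_lt_top
  have hgint : Integrable g ℙ := by
    refine ⟨hgm.aestronglyMeasurable, ?_⟩
    rw [hasFiniteIntegral_def]
    calc ∫⁻ ω, (‖g ω‖₊ : ℝ≥0∞) ∂ℙ
        ≤ ∫⁻ ω, ∑' k : ℕ, (D k).indicator (fun _ => ((k : ℝ≥0∞) + 1)) ω ∂ℙ :=
          lintegral_mono hgabs
      _ = ∑' k : ℕ, ∫⁻ ω, (D k).indicator (fun _ => ((k : ℝ≥0∞) + 1)) ω ∂ℙ :=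
          lintegral_tsum fun k =>
            (Measurable.indicator measurable_const (hDm k)).aemeasurable
      _ = ∑' k : ℕ, ((k : ℝ≥0∞) + 1) * ℙ (D k) := by
          refine tsum_congr fun k => ?_
          rw [lintegral_indicator_const (hDm k)]
      _ < ⊤ := hsum
  -- the weight
  refine ⟨fun ω => Real.exp (g ω), Real.measurable_exp.comp hgm, fun ω => Real.exp_pos _,
    ?_, ?_, ?_, ?_⟩
  · refine hgint.mono ?_ ?_
    · have hm2 : Measurable (fun ω => posLog (Real.exp (g ω))) := by
        unfold posLog
        exact (Real.measurable_log.comp (Real.measurable_exp.comp hgm)).max measurable_const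
      exact hm2.aestronglyMeasurable
    · filter_upwards with ω
      rw [Real.norm_eq_abs, Real.norm_eq_abs]
      have : posLog (Real.exp (g ω)) = max (g ω) 0 := by
        simp [posLog, Real.log_exp]
      rw [this, abs_of_nonneg (le_max_right _ _)]
      exact max_le (le_abs_self _) (abs_nonneg _)
  · refine hgint.mono ?_ ?_
    · have hm2 : Measurable (fun ω => posLog ((Real.exp (g ω))⁻¹)) := by
        unfold posLog
        exact (Real.measurable_log.comp (Real.measurable_exp.comp hgm).inv).max measurable_const
      exact hm2.aestronglyMeasurable
    · filter_upwards with ω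
      rw [Real.norm_eq_abs, Real.norm_eq_abs]
      have : posLog ((Real.exp (g ω))⁻¹) = max (-g ω) 0 := by
        rw [posLog, ← Real.exp_neg, Real.log_exp]
      rw [this, abs_of_nonneg (le_max_right _ _)]
      exact max_le (neg_le_abs _) (abs_nonneg _)
  · intro C
    obtain ⟨m, hm⟩ := exists_nat_gt (Real.log C)
    have heven : Even (2 * m) := even_two_mul m
    have hcval : c (2 * m) = (2 * m : ℝ) + 1 := by simp [c, heven]
    have hsub : D (2 * m) ⊆ {ω | C < Real.exp (g ω)} := by
      intro ω hω
      have h1 : g ω = (2 * m : ℝ) + 1 := by rw [hval _ _ hω, hcval]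
      have h2 : Real.log C < (2 * m : ℝ) + 1 := by
        push_cast
        nlinarith [Nat.cast_nonneg (α := ℝ) m, hm]
      show C < Real.exp (g ω)
      rcases le_or_gt C 0 with hC | hC
      · exact hC.trans_lt (Real.exp_pos _)
      · rw [h1]
        calc C = Real.exp (Real.log C) := (Real.exp_log hC).symm
          _ < Real.exp ((2 * m : ℝ) + 1) := Real.exp_lt_exp.mpr h2
    exact (hDpos (2 * m)).trans_le (measure_mono hsub)
  · intro ε hε
    obtain ⟨m, hm⟩ := exists_nat_gt (-Real.log ε)
    have hodd : ¬ Even (2 * m + 1) := by simp [parity_simps]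
    have hcval : c (2 * m + 1) = -((2 * m + 1 : ℝ) + 1) := by
      show (if Even (2 * m + 1) then ((2 * m + 1 : ℕ) : ℝ) + 1 else -(((2 * m + 1 : ℕ) : ℝ) + 1))
        = -((2 * m + 1 : ℝ) + 1)
      rw [if_neg hodd]
      push_cast
      ring
    have hsub : D (2 * m + 1) ⊆ {ω | Real.exp (g ω) < ε} := by
      intro ω hω
      have h1 : g ω = -((2 * m + 1 : ℝ) + 1) := by
        rw [hval _ _ hω, hcval]
      show Real.exp (g ω) < ε
      rw [h1]
      have h2 : -((2 * m + 1 : ℝ) + 1) < Real.log ε := by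
        push_cast
        nlinarith [Nat.cast_nonneg (α := ℝ) m, hm]
      calc Real.exp (-((2 * m + 1 : ℝ) + 1)) < Real.exp (Real.log ε) :=
            Real.exp_lt_exp.mpr h2
        _ = ε := Real.exp_log hε
    exact (hDpos (2 * m + 1)).trans_le (measure_mono hsub)

/-- Over any invertible ergodic measure-preserving transformation of a
non-atomic probability space there is a measurable `a : Ω → (0, ∞)` whose scalar cocycle
satisfies the integrability conditions of the Multiplicative Ergodic Theorem while its
dichotomy spectrum is unbounded from above and from below. -/
theorem exists_integrable_cocycle_with_unbounded_spectrum
    {Ω : Type*} [MeasurableSpace Ω] (ℙ : Measure Ω) [IsProbabilityMeasure ℙ]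
    (θ θinv : Ω → Ω) (hθm : Measurable θ) (hθinvm : Measurable θinv)
    (hli : Function.LeftInverse θinv θ) (hri : Function.RightInverse θinv θ)
    (hpres : MeasurePreserving θ ℙ ℙ)
    (herg : ∀ A : Set Ω, MeasurableSet A → θ ⁻¹' A = A → ℙ A = 0 ∨ ℙ A = 1)
    (hna : ∀ A : Set Ω, MeasurableSet A → 0 < ℙ A →
      ∃ B ⊆ A, MeasurableSet B ∧ 0 < ℙ B ∧ ℙ B < ℙ A) :
    ∃ a : Ω → ℝ, Measurable a ∧ (∀ ω, 0 < a ω) ∧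
      Integrable (fun ω => posLog (a ω)) ℙ ∧
      Integrable (fun ω => posLog ((a ω)⁻¹)) ℙ ∧
      (∀ c : ℝ, ∃ γ > c, ¬ ScalarAdmitsED ℙ θ θinv (scalarCocycle θ θinv a) γ) ∧
      (∀ c : ℝ, ∃ γ < c, ¬ ScalarAdmitsED ℙ θ θinv (scalarCocycle θ θinv a) γ) := by
  classical
  obtain ⟨a, ham, hapos, hint1, hint2, hbig, hsmall⟩ := exists_weight ℙ hna
  -- basic computations about the cocycle
  have hΦ1 : ∀ ω, scalarCocycle θ θinv a 1 ω = a ω := by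
    intro ω
    show scalarCocycle θ θinv a (Int.ofNat 1) ω = a ω
    simp [scalarCocycle]
  have hΦneg1 : ∀ ω, scalarCocycle θ θinv a (-1) ω = (a (θinv ω))⁻¹ := by
    intro ω
    show scalarCocycle θ θinv a (Int.negSucc 0) ω = (a (θinv ω))⁻¹
    simp [scalarCocycle]
  -- θinv preserves ℙ on measurable sets
  have hinvpres : ∀ S : Set Ω, MeasurableSet S → ℙ (θinv ⁻¹' S) = ℙ S := by
    intro S hS
    have h1 : ℙ (θ ⁻¹' (θinv ⁻¹' S)) = ℙ (θinv ⁻¹' S) :=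
      hpres.measure_preimage (hθinvm hS).nullMeasurableSet
    have h2 : θ ⁻¹' (θinv ⁻¹' S) = S := by
      ext ω
      simp [Set.mem_preimage, hli ω]
    rw [h2] at h1
    exact h1.symm
  have noED : ∀ γ : ℝ, ¬ ScalarAdmitsED ℙ θ θinv (scalarCocycle θ θinv a) γ := by
    intro γ hED
    obtain ⟨P, hPm, hPid, hPinv, α, hαpos, K, hK, hae⟩ := hED
    have hKpos : (0:ℝ) < K := lt_of_lt_of_le one_pos hK
    have hP01 : ∀ ω, P ω = 0 ∨ P ω = 1 := by
      intro ω
      have h := hPid ω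
      have h2 : P ω * (P ω - 1) = 0 := by ring_nf; linarith [h]
      rcases mul_eq_zero.mp h2 with h3 | h3
      · exact Or.inl h3
      · exact Or.inr (by linarith)
    have hPθ : ∀ ω, P (θ ω) = P ω := by
      intro ω
      have h := hPinv 1 ω
      have hz : zIter θ θinv 1 ω = θ ω := by
        show θ^[1] ω = θ ω
        rfl
      rw [hz, hΦ1, mul_comm (a ω) (P ω)] at h
      exact mul_right_cancel₀ (hapos ω).ne' h
    set A : Set Ω := P ⁻¹' {1} with hAdef
    have hAmeas : MeasurableSet A := hPm (measurableSet_singleton 1)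
    have hAinv : θ ⁻¹' A = A := by
      ext ω
      simp [hAdef, Set.mem_preimage, hPθ ω]
    rcases herg A hAmeas hAinv with h0 | h1
    · -- P = 0 a.e.: use the backward bound at n = -1
      have hae0 : ∀ᵐ ω ∂ℙ, P ω = 0 := by
        have hsub : {ω | ¬ P ω = 0} ⊆ A := by
          intro ω hω
          rcases hP01 ω with h | h
          · exact absurd h hω
          · exact h
        exact measure_mono_null hsub h0
      set ε : ℝ := (K * Real.exp (-γ))⁻¹ with hεdef
      have hεpos : 0 < ε := by positivity
      have hbnd : ∀ᵐ ω ∂ℙ, ¬ (a (θinv ω) < ε) := by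
        filter_upwards [hae, hae0] with ω hb hP0
        have h := hb.2 (-1) (by norm_num)
        rw [hΦneg1, hP0] at h
        simp only [sub_zero, mul_one] at h
        have hpos : 0 < (a (θinv ω))⁻¹ := inv_pos.mpr (hapos _)
        rw [abs_of_pos hpos] at h
        have hle : (a (θinv ω))⁻¹ ≤ K * Real.exp (-γ) := by
          refine h.trans ?_
          have : (γ + α) * ((-1 : ℤ) : ℝ) ≤ -γ := by
            push_cast
            nlinarith
          exact mul_le_mul_of_nonneg_left (Real.exp_le_exp.mpr this) hKpos.le
        intro hlt
        have h2 : (K * Real.exp (-γ))⁻¹ ≤ a (θinv ω) := by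
          rw [← inv_inv (a (θinv ω))]
          exact inv_anti₀ (inv_pos.mpr (hapos _)) hle
        exact absurd hlt (not_lt.mpr h2)
      have hzero : ℙ {ω | a (θinv ω) < ε} = 0 := by
        have := hbnd
        rw [ae_iff] at this
        simpa using this
      have hSmeas : MeasurableSet {x | a x < ε} := measurableSet_lt ham measurable_const
      have hpre : {ω | a (θinv ω) < ε} = θinv ⁻¹' {x | a x < ε} := rfl
      rw [hpre, hinvpres _ hSmeas] at hzero
      exact absurd hzero (hsmall ε hεpos).ne'
    · -- P = 1 a.e.: use the forward bound at n = 1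
      have hae1 : ∀ᵐ ω ∂ℙ, P ω = 1 := by
        have hcompl : ℙ Aᶜ = 0 := by
          rw [measure_compl hAmeas (measure_ne_top ℙ A), h1]
          simp
        have hsub : {ω | ¬ P ω = 1} ⊆ Aᶜ := by
          intro ω hω
          exact hω
        exact measure_mono_null hsub hcompl
      set C : ℝ := K * Real.exp γ with hCdef
      have hbnd : ∀ᵐ ω ∂ℙ, ¬ (C < a ω) := by
        filter_upwards [hae, hae1] with ω hb hP1
        have h := hb.1 1 (by norm_num)
        rw [hΦ1, hP1, mul_one] at h
        rw [abs_of_pos (hapos ω)] at h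
        have hle : a ω ≤ C := by
          refine h.trans ?_
          have : (γ - α) * ((1 : ℤ) : ℝ) ≤ γ := by
            push_cast
            nlinarith
          exact mul_le_mul_of_nonneg_left (Real.exp_le_exp.mpr this) hKpos.le
        exact not_lt.mpr hle
      have hzero : ℙ {ω | C < a ω} = 0 := by
        rw [ae_iff] at hbnd
        simpa using hbnd
      exact absurd hzero (hbig C).ne'
  refine ⟨a, ham, hapos, hint1, hint2, ?_, ?_⟩
  · intro c
    exact ⟨c + 1, by linarith, noED _⟩
  · intro c
    exact ⟨c - 1, by linarith, noED _⟩


end
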